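/- Let (A, m) be a complete noetherian local ring, n ≥ 1, T ∈ ℕⁿ nonzero, and G ∈ m⟦X₁,…,Xₙ⟧ (a power series with all coefficients in m). Let R = A⟦X₁,…,Xₙ⟧/(X^T − G) and M = { Σ_{I : T ≰ I} a_I X^I } the A-submodule of power series supported on exponents I with T ≰ I. Then the restriction of the quotient map π : A⟦X₁,…,Xₙ⟧ → R to M is bijective. -/

import Mathlib

open MvPowerSeries


namespace PQBAux

variable {A : Type*} [CommRing A] {n : ℕ}

lemma coeff_mul_mem_right (J : Ideal A) (φ ψ : MvPowerSeries (Fin n) A)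
    (h : ∀ I, coeff I ψ ∈ J) (I : Fin n →₀ ℕ) : coeff I (φ * ψ) ∈ J := by
  classical
  rw [coeff_mul]
  exact Ideal.sum_mem _ fun p _ => J.mul_mem_left _ (h p.2)

lemma coeff_mul_mem (J K : Ideal A) (φ ψ : MvPowerSeries (Fin n) A)
    (hφ : ∀ I, coeff I φ ∈ J) (hψ : ∀ I, coeff I ψ ∈ K) (I : Fin n →₀ ℕ) :
    coeff I (φ * ψ) ∈ J * K := by
  classical
  rw [coeff_mul]
  exact Ideal.sum_mem _ fun p _ => Ideal.mul_mem_mul (hφ p.1) (hψ p.2)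

noncomputable def ePart (Tf : Fin n →₀ ℕ) (F : MvPowerSeries (Fin n) A) :
    MvPowerSeries (Fin n) A :=
  fun I => if Tf ≤ I then 0 else coeff I F

noncomputable def shift (Tf : Fin n →₀ ℕ) (F : MvPowerSeries (Fin n) A) : MvPowerSeries (Fin n) A :=
  fun I => coeff (I + Tf) F

lemma coeff_ePart (Tf I : Fin n →₀ ℕ) (F : MvPowerSeries (Fin n) A) :
    coeff I (ePart Tf F) = if Tf ≤ I then 0 else coeff I F := rfl

lemma coeff_shift (Tf I : Fin n →₀ ℕ) (F : MvPowerSeries (Fin n) A) :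
    coeff I (shift Tf F) = coeff (I + Tf) F := rfl

lemma decomp (Tf : Fin n →₀ ℕ) (F : MvPowerSeries (Fin n) A) :
    F = ePart Tf F + monomial Tf 1 * shift Tf F := by
  ext I
  rw [map_add, coeff_monomial_mul, coeff_ePart]
  by_cases h : Tf ≤ I
  · rw [if_pos h, if_pos h, one_mul, coeff_shift, tsub_add_cancel_of_le h, zero_add]
  · rw [if_neg h, if_neg h, add_zero]

lemma prod_monomial_one (s : Finset (Fin n)) (f : Fin n → (Fin n →₀ ℕ)) :
    (∏ i ∈ s, monomial (f i) (1 : A)) = monomial (∑ i ∈ s, f i) (1 : A) := by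
  classical
  induction s using Finset.induction with
  | empty => simp [monomial_zero_one]
  | insert _ _ h ih =>
    rw [Finset.prod_insert h, Finset.sum_insert h, ih, monomial_mul_monomial, one_mul]

lemma prod_X_pow (T : Fin n → ℕ) :
    (∏ i, (X i : MvPowerSeries (Fin n) A) ^ T i)
      = monomial (∑ i, Finsupp.single i (T i)) 1 := by
  rw [Finset.prod_congr rfl fun i _ => X_pow_eq (R := A) i (T i)]
  exact prod_monomial_one _ _

lemma sum_single_apply (T : Fin n → ℕ) (j : Fin n) :
    (∑ i, Finsupp.single i (T i)) j = T j := by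
  classical
  rw [Finset.sum_apply']
  simp [Finsupp.single_apply]

lemma smod_iff (J : Ideal A) (a b : A) :
    a ≡ b [SMOD (J • ⊤ : Submodule A A)] ↔ a - b ∈ J := by
  rw [SModEq.sub_mem, Ideal.smul_eq_mul, Ideal.mul_top]

end PQBAux

open PQBAux

/-- Let `(A, m)` be a complete noetherian local ring, `T ∈ ℕⁿ` nonzero, and
`G ∈ m⟦X₁,…,Xₙ⟧`.  Let `R = A⟦X₁,…,Xₙ⟧/(X^T − G)` and let `M` be the `A`-submodule of
power series supported on exponents `I` with `T ≰ I`.  Then the restriction to `M` of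
the quotient map `π : A⟦X₁,…,Xₙ⟧ → R` is bijective. -/

theorem powerSeries_quotient_basis
    (A : Type*) [CommRing A] [IsLocalRing A] [IsNoetherianRing A]
    [IsAdicComplete (IsLocalRing.maximalIdeal A) A]
    (n : ℕ) (hn : 1 ≤ n) (T : Fin n → ℕ) (hT : T ≠ 0)
    (G : MvPowerSeries (Fin n) A)
    (hG : ∀ I : Fin n →₀ ℕ, coeff I G ∈ IsLocalRing.maximalIdeal A) :
    Set.BijOn
      (Ideal.Quotient.mk (Ideal.span {(∏ i, (X i : MvPowerSeries (Fin n) A) ^ T i) - G}))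
      {F : MvPowerSeries (Fin n) A | ∀ I : Fin n →₀ ℕ, (∀ i, T i ≤ I i) → coeff I F = 0}
      Set.univ := by
  classical
  set m : Ideal A := IsLocalRing.maximalIdeal A with hm
  set Tf : Fin n →₀ ℕ := ∑ i, Finsupp.single i (T i) with hTfdef
  have hTfapp : ∀ j, Tf j = T j := fun j => sum_single_apply T j
  have hprod : (∏ i, (X i : MvPowerSeries (Fin n) A) ^ T i) = monomial Tf 1 :=
    prod_X_pow T
  set f : MvPowerSeries (Fin n) A :=
    (∏ i, (X i : MvPowerSeries (Fin n) A) ^ T i) - G with hfdef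
  have hfeq : f = monomial Tf 1 - G := by rw [hfdef, hprod]
  have hTI : ∀ I : Fin n →₀ ℕ, (∀ i, T i ≤ I i) ↔ Tf ≤ I := by
    intro I
    rw [Finsupp.le_def]
    constructor
    · intro h i; rw [hTfapp]; exact h i
    · intro h i; have := h i; rwa [hTfapp] at this
  refine ⟨fun _ _ => Set.mem_univ _, ?_, ?_⟩
  · -- injectivity
    intro F₁ h₁ F₂ h₂ heq
    rw [Ideal.Quotient.eq] at heq
    obtain ⟨Q, hQ⟩ := Ideal.mem_span_singleton'.mp heq
    set c : Ideal A := Ideal.span (Set.range fun I => coeff I Q) with hcdef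
    have hc : ∀ I, coeff I Q ∈ c := fun I => Ideal.subset_span ⟨I, rfl⟩
    have key : ∀ I : Fin n →₀ ℕ, coeff I Q ∈ m * c := by
      intro I
      have h2 : Q * monomial Tf 1 = Q * G + (F₁ - F₂) := by
        rw [hfeq] at hQ; linear_combination hQ
      have h3 : coeff (I + Tf) (F₁ - F₂) = 0 := by
        have hle : ∀ i, T i ≤ (I + Tf) i := by
          intro i; rw [Finsupp.add_apply, hTfapp]; exact Nat.le_add_left _ _
        rw [map_sub, h₁ _ hle, h₂ _ hle, sub_zero]
      have h1 : coeff I Q = coeff (I + Tf) (Q * G) := by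
        have := coeff_add_mul_monomial (n := Tf) (m := I) (φ := Q) (1 : A)
        rw [mul_one] at this
        rw [← this, h2, map_add, h3, add_zero]
      rw [h1, mul_comm Q G]
      exact coeff_mul_mem m c G Q hG hc _
    have hbot : c = ⊥ := by
      refine Submodule.eq_bot_of_le_smul_of_le_jacobson_bot m c
        (IsNoetherian.noetherian c) ?_ (IsLocalRing.maximalIdeal_le_jacobson ⊥)
      rw [Ideal.smul_eq_mul]
      rw [hcdef]
      refine Ideal.span_le.mpr ?_
      rintro x ⟨I, rfl⟩
      exact key I
    have hQ0 : Q = 0 := by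
      ext I
      have := hc I
      rw [hbot, Submodule.mem_bot] at this
      simpa using this
    have : F₁ - F₂ = 0 := by rw [← hQ, hQ0, zero_mul]
    exact sub_eq_zero.mp this
  · -- surjectivity
    rintro y -
    obtain ⟨F, rfl⟩ := Ideal.Quotient.mk_surjective y
    set r : MvPowerSeries (Fin n) A → MvPowerSeries (Fin n) A :=
      fun F => ePart Tf F + G * shift Tf F with hrdef
    set seq : ℕ → MvPowerSeries (Fin n) A := fun k => r^[k] F with hseqdef
    have hseq_succ : ∀ k, seq (k + 1) = r (seq k) := fun k =>
      Function.iterate_succ_apply' r k F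
    have hs : ∀ k I, coeff I (shift Tf (seq k)) ∈ m ^ k := by
      intro k
      induction k with
      | zero => intro I; simp
      | succ k ih =>
        intro I
        rw [hseq_succ, hrdef, coeff_shift, map_add, coeff_ePart,
          if_pos (le_add_self), zero_add, pow_succ']
        exact coeff_mul_mem m (m ^ k) G _ hG ih _
    have hstep : ∀ k, seq (k + 1) - seq k = (G - monomial Tf 1) * shift Tf (seq k) := by
      intro k
      rw [hseq_succ, hrdef]
      have hd := decomp Tf (seq k)
      show ePart Tf (seq k) + G * shift Tf (seq k) - seq k = _
      linear_combination -hd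
    have htail : ∀ k (I : Fin n →₀ ℕ), Tf ≤ I → coeff I (seq k) ∈ m ^ k := by
      intro k I hI
      have hd := decomp Tf (seq k)
      have heq1 : coeff I (seq k) = coeff (I - Tf) (shift Tf (seq k)) := by
        conv_lhs => rw [hd]
        rw [map_add, coeff_ePart, if_pos hI, zero_add, coeff_monomial_mul,
          if_pos hI, one_mul]
      rw [heq1]
      exact hs k _
    have hcau : ∀ {k l : ℕ}, k ≤ l → ∀ I,
        coeff I (seq l) - coeff I (seq k) ∈ m ^ k := by
      intro k l hkl I
      induction l, hkl using Nat.le_induction with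
      | base => simp
      | succ l hkl ih =>
        have heq2 : coeff I (seq (l + 1)) - coeff I (seq k)
            = coeff I (seq (l + 1) - seq l) + (coeff I (seq l) - coeff I (seq k)) := by
          rw [map_sub]; ring
        rw [heq2]
        refine add_mem (Ideal.pow_le_pow_right hkl ?_) ih
        rw [hstep]
        exact coeff_mul_mem_right (m ^ l) _ _ (hs l) I
    have hex : ∀ I : Fin n →₀ ℕ, ∃ L : A, ∀ k,
        coeff I (seq k) ≡ L [SMOD (m ^ k • ⊤ : Submodule A A)] := by
      intro I
      refine (IsAdicComplete.toIsPrecomplete : IsPrecomplete m A).prec ?_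
      intro k l hkl
      rw [smod_iff]
      have := hcau hkl I
      have h' : coeff I (seq k) - coeff I (seq l)
          = -(coeff I (seq l) - coeff I (seq k)) := by ring
      rw [h']
      exact neg_mem this
    choose L hL using hex
    set Flim : MvPowerSeries (Fin n) A := fun I => L I with hFlimdef
    have hcoeffFlim : ∀ I, coeff I Flim = L I := fun I => rfl
    have hFlimM : ∀ I : Fin n →₀ ℕ, Tf ≤ I → coeff I Flim = 0 := by
      intro I hI
      refine (IsAdicComplete.toIsHausdorff : IsHausdorff m A).haus _ ?_
      intro k
      rw [smod_iff, sub_zero, hcoeffFlim]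
      have h1 := (smod_iff _ _ _).mp (hL I k)
      have h2 := htail k I hI
      have h3 : L I = coeff I (seq k) - (coeff I (seq k) - L I) := by ring
      rw [h3]
      exact sub_mem h2 h1
    set Qk : ℕ → MvPowerSeries (Fin n) A :=
      fun k => ∑ j ∈ Finset.range k, shift Tf (seq j) with hQkdef
    have hQcoeff : ∀ k I, coeff I (Qk k) = ∑ j ∈ Finset.range k,
        coeff I (shift Tf (seq j)) := by
      intro k I; rw [hQkdef]; exact map_sum _ _ _
    have hQcau : ∀ {k l : ℕ}, k ≤ l → ∀ I,
        coeff I (Qk l) - coeff I (Qk k) ∈ m ^ k := by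
      intro k l hkl I
      rw [hQcoeff, hQcoeff, ← Finset.sum_Ico_eq_sub _ hkl]
      refine Ideal.sum_mem _ ?_
      intro j hj
      have hkj : k ≤ j := (Finset.mem_Ico.mp hj).1
      exact Ideal.pow_le_pow_right hkj (hs j I)
    have hkey : ∀ k, F - seq k = f * Qk k := by
      intro k
      induction k with
      | zero => simp [hseqdef, hQkdef]
      | succ k ih =>
        have hQs : Qk (k + 1) = Qk k + shift Tf (seq k) := Finset.sum_range_succ _ k
        rw [hQs]
        have h1 := hstep k
        linear_combination ih - h1 - shift Tf (seq k) * hfeq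
    have hQex : ∀ I : Fin n →₀ ℕ, ∃ L : A, ∀ k,
        coeff I (Qk k) ≡ L [SMOD (m ^ k • ⊤ : Submodule A A)] := by
      intro I
      refine (IsAdicComplete.toIsPrecomplete : IsPrecomplete m A).prec ?_
      intro k l hkl
      rw [smod_iff]
      have := hQcau hkl I
      have h' : coeff I (Qk k) - coeff I (Qk l)
          = -(coeff I (Qk l) - coeff I (Qk k)) := by ring
      rw [h']
      exact neg_mem this
    choose QL hQL using hQex
    set Qlim : MvPowerSeries (Fin n) A := fun I => QL I with hQlimdef
    have hcoeffQlim : ∀ I, coeff I Qlim = QL I := fun I => rfl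
    have hfinal : F - Flim = f * Qlim := by
      rw [← sub_eq_zero]
      ext I
      rw [map_zero]
      refine (IsAdicComplete.toIsHausdorff : IsHausdorff m A).haus _ ?_
      intro k
      rw [smod_iff, sub_zero]
      have hps : F - Flim - f * Qlim = f * (Qk k - Qlim) + (seq k - Flim) := by
        linear_combination hkey k
      rw [hps, map_add]
      refine add_mem (coeff_mul_mem_right (m ^ k) _ _ ?_ I) ?_
      · intro J
        rw [map_sub, hcoeffQlim]
        exact (smod_iff _ _ _).mp (hQL J k)
      · rw [map_sub, hcoeffFlim]
        exact (smod_iff _ _ _).mp (hL I k)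
    refine ⟨Flim, ?_, ?_⟩
    · intro I hI
      exact hFlimM I ((hTI I).mp hI)
    · rw [Ideal.Quotient.eq]
      refine Ideal.mem_span_singleton'.mpr ⟨-Qlim, ?_⟩
      have : Flim - F = -(F - Flim) := by ring
      rw [this, hfinal]; ring
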